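/- Let B be a bicategory, and let G' : a ⟶ b and G'' : b ⟶ c be 1-morphisms. Suppose G' admits an honest right adjoint H' : b ⟶ a (i.e., there is an adjunction G' ⊣ H' in B with unit and counit satisfying the triangle identities), and suppose (H'', ε'') is a weak right adjoint of G''. Then the pair consisting of the 1-morphism H'' ≫ H' : c ⟶ a together with the 2-morphism ε''' : (H'' ≫ H') ≫ (G' ≫ G'') ⟶ 𝟙 c obtained by first contracting H' against G' using the counit ε' of the adjunction G' ⊣ H' and then applying ε'', is a weak right adjoint of the composite G' ≫ G'' : a ⟶ c. -/

import Mathlib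

open CategoryTheory Bicategory

section
variable {B : Type*} [Bicategory B] {a b c : B} {f : a ⟶ b} {g : b ⟶ a}

lemma bicat_rt (adj : f ⊣ g) :
    g ◁ adj.unit ≫ (α_ g f g).inv ≫ adj.counit ▷ g = (ρ_ g).hom ≫ (λ_ g).inv := by
  have := adj.right_triangle
  dsimp only [rightZigzag, bicategoricalComp] at this
  simpa using this

lemma bicat_lt (adj : f ⊣ g) :
    adj.unit ▷ f ≫ (α_ f g f).hom ≫ f ◁ adj.counit = (λ_ f).hom ≫ (ρ_ f).inv := by
  have := adj.left_triangle
  dsimp only [leftZigzag, bicategoricalComp] at this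
  simpa using this

lemma bicat_hom_equiv (adj : f ⊣ g) (X : c ⟶ a) (J : c ⟶ b) :
    Function.Bijective (fun θ : X ⟶ J ≫ g =>
      (θ ▷ f) ≫ (α_ J g f).hom ≫ J ◁ adj.counit ≫ (ρ_ J).hom) := by
  have h1 : ∀ θ : X ⟶ J ≫ g,
      (ρ_ X).inv ≫ X ◁ adj.unit ≫ (α_ X f g).inv ≫
        (((θ ▷ f) ≫ (α_ J g f).hom ≫ J ◁ adj.counit ≫ (ρ_ J).hom) ▷ g) = θ := by
    intro θ
    calc _ = 𝟙 X ⊗≫ (X ◁ adj.unit ≫ θ ▷ (f ≫ g)) ⊗≫ J ◁ (adj.counit ▷ g) ⊗≫ 𝟙 (J ≫ g) := by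
            bicategory
      _ = 𝟙 X ⊗≫ θ ⊗≫ J ◁ (g ◁ adj.unit ≫ (α_ g f g).inv ≫ adj.counit ▷ g) ⊗≫ 𝟙 (J ≫ g) := by
            rw [whisker_exchange]; bicategory
      _ = θ := by rw [bicat_rt adj]; bicategory
  constructor
  · intro θ₁ θ₂ h
    dsimp only at h
    rw [← h1 θ₁, ← h1 θ₂, h]
  · intro ψ
    refine ⟨(ρ_ X).inv ≫ X ◁ adj.unit ≫ (α_ X f g).inv ≫ (ψ ▷ g), ?_⟩
    dsimp only
    calc _ = 𝟙 (X ≫ f) ⊗≫ X ◁ adj.unit ▷ f ⊗≫ (ψ ▷ (g ≫ f) ≫ J ◁ adj.counit) ⊗≫ 𝟙 J := by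
            bicategory
      _ = 𝟙 (X ≫ f) ⊗≫ X ◁ (adj.unit ▷ f ≫ (α_ f g f).hom ≫ f ◁ adj.counit) ⊗≫ ψ ⊗≫ 𝟙 J := by
            rw [← whisker_exchange]; bicategory
      _ = ψ := by rw [bicat_lt adj]; bicategory

end

/-- A pair `(H, ε)` is a weak right adjoint of `G : a ⟶ b` if for every `J : b ⟶ a`,
the map `θ ↦ (θ ▷ G) ≫ ε` is a bijection from 2-morphisms `J ⟶ H` to 2-morphisms
`J ≫ G ⟶ 𝟙 b`. -/
def IsWeakRightAdjoint {B : Type*} [Bicategory B] {a b : B} (G : a ⟶ b)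
    (H : b ⟶ a) (ε₀ : H ≫ G ⟶ 𝟙 b) : Prop :=
  ∀ J : b ⟶ a, Function.Bijective (fun θ : J ⟶ H => (θ ▷ G) ≫ ε₀)

theorem weak_right_adjoint_comp_of_right_adjoint {B : Type*} [Bicategory B] {a b c : B}
    (G' : a ⟶ b) (G'' : b ⟶ c) (H' : b ⟶ a) (H'' : c ⟶ b)
    (adj : G' ⊣ H') (ε'' : H'' ≫ G'' ⟶ 𝟙 c) (hH'' : IsWeakRightAdjoint G'' H'' ε'') :
    IsWeakRightAdjoint (G' ≫ G'') (H'' ≫ H')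
      ((α_ H'' H' (G' ≫ G'')).hom ≫
        H'' ◁ ((α_ H' G' G'').inv ≫ (adj.counit ▷ G'') ≫ (λ_ G'').hom) ≫ ε'') := by
  intro J
  have key : ∀ θ : J ⟶ H'' ≫ H', (θ ▷ (G' ≫ G'')) ≫
      ((α_ H'' H' (G' ≫ G'')).hom ≫
        H'' ◁ ((α_ H' G' G'').inv ≫ (adj.counit ▷ G'') ≫ (λ_ G'').hom) ≫ ε'')
      = (α_ J G' G'').inv ≫
          (((θ ▷ G') ≫ (α_ H'' H' G').hom ≫ H'' ◁ adj.counit ≫ (ρ_ H'').hom) ▷ G'') ≫ ε'' := by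
    intro θ
    calc _ = 𝟙 (J ≫ G' ≫ G'') ⊗≫ θ ▷ (G' ≫ G'') ⊗≫
              H'' ◁ adj.counit ▷ G'' ⊗≫ ε'' := by bicategory
      _ = _ := by bicategory
  have hPhi := bicat_hom_equiv adj J H''
  have hPsi := hH'' (J ≫ G')
  constructor
  · intro θ₁ θ₂ h
    dsimp only at h
    rw [key θ₁, key θ₂, cancel_epi] at h
    exact hPhi.injective (hPsi.injective h)
  · intro y
    obtain ⟨ψ, hψ⟩ := hPsi.surjective ((α_ J G' G'').hom ≫ y)
    obtain ⟨θ, hθ⟩ := hPhi.surjective ψ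
    refine ⟨θ, ?_⟩
    dsimp only at hψ hθ ⊢
    rw [key θ, hθ, hψ, Iso.inv_hom_id_assoc]
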